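/- Let L be an embedded polygonal arc in ℝ³ with vertices p₀, …, p_n (n ≥ 1) and edges eᵢ = [p_{i−1}, pᵢ], and let u be a unit vector such that: (a) for every i, pᵢ − p_{i−1} does not lie in the span of u; and (b) for any two distinct edge lines ℓᵢ, ℓⱼ (the 1-dimensional affine subspaces through p_{i−1}, pᵢ and through p_{j−1}, pⱼ) that are coplanar, u does not lie in the direction space of the 2-dimensional affine subspace containing them. Then the set of points of the plane having at least two preimages in L under the orthogonal projection π_u is finite. (Used in the proof of Lemma 2.1: the projection image λ_u(L) has only finitely many crossing points.) -/

import Mathlib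

open Module Set

local notation "E3" => EuclideanSpace ℝ (Fin 3)

/-- The orthogonal projection of ℝ³ onto the orthogonal complement of the span of `u`. -/
noncomputable def projAlong (u : E3) : E3 →L[ℝ] ↥((ℝ ∙ u)ᗮ) :=
  Submodule.orthogonalProjectionOnto ((ℝ ∙ u)ᗮ)

lemma projAlong_eq_iff (u : E3) (x y : E3) :
    projAlong u x = projAlong u y ↔ x - y ∈ (ℝ ∙ u : Submodule ℝ E3) := by
  rw [← sub_eq_zero, ← map_sub]
  show Submodule.orthogonalProjectionOnto ((ℝ ∙ u)ᗮ) (x - y) = 0 ↔ _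
  rw [Submodule.orthogonalProjectionOnto_eq_zero_iff, Submodule.orthogonal_orthogonal]

lemma segment_subset_affineSpan_pair (a b : E3) :
    segment ℝ a b ⊆ (affineSpan ℝ {a, b} : Set E3) := by
  rw [← convexHull_pair]; exact convexHull_subset_affineSpan _

/-- Key geometric lemma: given the hypotheses (a) and (b), two "vertical" chords
between edges `i` and `j` must share their endpoint on edge `i`. -/
lemma key_eq
    {n : ℕ} {p : Fin (n + 1) → E3} {u : E3} (hu0 : u ≠ 0)
    (ha : ∀ i : Fin n, p i.succ - p i.castSucc ∉ (ℝ ∙ u : Submodule ℝ E3))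
    (hb : ∀ i j : Fin n,
      affineSpan ℝ {p i.castSucc, p i.succ} ≠ affineSpan ℝ {p j.castSucc, p j.succ} →
      ∀ Q : AffineSubspace ℝ E3, finrank ℝ Q.direction = 2 →
        affineSpan ℝ {p i.castSucc, p i.succ} ≤ Q →
        affineSpan ℝ {p j.castSucc, p j.succ} ≤ Q →
        u ∉ Q.direction)
    (i j : Fin n) {x y x' y' : E3}
    (hx : x ∈ segment ℝ (p i.castSucc) (p i.succ))
    (hx' : x' ∈ segment ℝ (p i.castSucc) (p i.succ))
    (hy : y ∈ segment ℝ (p j.castSucc) (p j.succ))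
    (hy' : y' ∈ segment ℝ (p j.castSucc) (p j.succ))
    (hxy : x - y ∈ (ℝ ∙ u : Submodule ℝ E3))
    (hxy' : x' - y' ∈ (ℝ ∙ u : Submodule ℝ E3))
    (hne : x ≠ y) : x = x' := by
  have hdi := ha i
  have hdj := ha j
  by_cases hspan : affineSpan ℝ {p i.castSucc, p i.succ} = affineSpan ℝ {p j.castSucc, p j.succ}
  · exfalso
    have hxm : x ∈ affineSpan ℝ {p i.castSucc, p i.succ} :=
      segment_subset_affineSpan_pair _ _ hx
    have hym : y ∈ affineSpan ℝ {p i.castSucc, p i.succ} := by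
      rw [hspan]; exact segment_subset_affineSpan_pair _ _ hy
    have h1 := AffineSubspace.vsub_mem_direction hxm hym
    rw [direction_affineSpan, vectorSpan_pair] at h1
    rw [Submodule.mem_span_singleton] at h1
    obtain ⟨r, hr⟩ := h1
    simp only [vsub_eq_sub] at hr
    rcases eq_or_ne r 0 with h0 | h0
    · apply hne
      rw [h0, zero_smul] at hr
      exact sub_eq_zero.1 hr.symm
    · apply hdi
      have hd : p i.succ - p i.castSucc = (-r⁻¹) • (x - y) := by
        rw [← hr, smul_smul]
        have : -r⁻¹ * r = -1 := by field_simp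
        rw [this, neg_one_smul, neg_sub]
      rw [hd]
      exact Submodule.smul_mem _ _ hxy
  -- extract segment parameters
  rw [segment_eq_image'] at hx hx' hy hy'
  obtain ⟨s, hs, rfl⟩ := hx
  obtain ⟨s', hs', rfl⟩ := hx'
  obtain ⟨t, ht, rfl⟩ := hy
  obtain ⟨t', ht', rfl⟩ := hy'
  simp only at hxy hxy' hne ⊢
  set c := p i.castSucc with hc
  set c₂ := p j.castSucc with hc2
  set d := p i.succ - c with hd
  set d₂ := p j.succ - c₂ with hd2
  by_cases hyy : c₂ + t • d₂ = c₂ + t' • d₂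
  · -- the two chords share their endpoint on edge j, hence also on edge i
    have h2 : (s - s') • d ∈ (ℝ ∙ u : Submodule ℝ E3) := by
      have := Submodule.sub_mem _ hxy hxy'
      have he : (c + s • d - (c₂ + t • d₂)) - (c + s' • d - (c₂ + t' • d₂))
          = (s - s') • d + ((c₂ + t' • d₂) - (c₂ + t • d₂)) := by module
      rw [he, ← hyy, sub_self, add_zero] at this
      exact this
    rcases eq_or_ne s s' with h0 | h0
    · rw [h0]
    · exfalso
      apply hdi
      have : d = (s - s')⁻¹ • ((s - s') • d) := by
        rw [smul_smul, inv_mul_cancel₀ (sub_ne_zero.2 h0), one_smul]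
      rw [this]
      exact Submodule.smul_mem _ _ h2
  · -- the endpoints on edge j differ: the two edge lines are coplanar, contradiction
    exfalso
    have htt : t ≠ t' := fun h => hyy (by rw [h])
    set W : Submodule ℝ E3 := Submodule.span ℝ ({d, u} : Set E3) with hW
    have hdW : d ∈ W := Submodule.subset_span (mem_insert _ _)
    have huW : u ∈ W := Submodule.subset_span (mem_insert_of_mem _ rfl)
    have hKW : (ℝ ∙ u : Submodule ℝ E3) ≤ W := by
      rw [Submodule.span_singleton_le_iff_mem]; exact huW
    have hli : LinearIndependent ℝ ![d, u] := by
      rw [LinearIndependent.pair_iff]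
      intro a b hab
      have haz : a = 0 := by
        by_contra h
        apply hdi
        have h1 : a • d = -(b • u) := eq_neg_of_add_eq_zero_left hab
        have : d = (-(a⁻¹ * b)) • u := by
          calc d = a⁻¹ • (a • d) := by rw [smul_smul, inv_mul_cancel₀ h, one_smul]
          _ = (-(a⁻¹ * b)) • u := by rw [h1, smul_neg, smul_smul, ← neg_smul]
        rw [this]
        exact Submodule.smul_mem _ _ (Submodule.mem_span_singleton_self u)
      have hbz : b = 0 := by
        rw [haz, zero_smul, zero_add] at hab
        exact (smul_eq_zero.1 hab).resolve_right hu0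
      exact ⟨haz, hbz⟩
    have hfr : finrank ℝ W = 2 := by
      have hrange : ({d, u} : Set E3) = Set.range ![d, u] := by
        simp [Matrix.range_cons, Matrix.range_empty]
        exact Set.pair_comm d u
      rw [hW, hrange, finrank_span_eq_card hli]
      simp
    set Q := AffineSubspace.mk' (c + s • d) W with hQ
    have hmemQ : ∀ z : E3, z - (c + s • d) ∈ W → z ∈ Q := fun z hz =>
      AffineSubspace.mem_mk'.2 (by simpa [vsub_eq_sub] using hz)
    have hQi : affineSpan ℝ {p i.castSucc, p i.succ} ≤ Q := by
      rw [affineSpan_le]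
      rintro z hz
      simp only [Set.mem_insert_iff, Set.mem_singleton_iff] at hz
      rcases hz with rfl | rfl
      · exact hmemQ _ (by
          have : c - (c + s • d) = (-s) • d := by module
          rw [this]; exact W.smul_mem _ hdW)
      · exact hmemQ _ (by
          have : p i.succ - (c + s • d) = (1 - s) • d := by rw [hd]; module
          rw [this]; exact W.smul_mem _ hdW)
    have hd2W : d₂ ∈ W := by
      have hy1 : (c + s • d) - (c₂ + t • d₂) ∈ W := hKW hxy
      have hy2 : (c + s' • d) - (c₂ + t' • d₂) ∈ W := hKW hxy'
      have hsum : (t - t') • d₂ ∈ W := by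
        have hmem := W.add_mem (W.sub_mem hy2 hy1) (W.smul_mem (s - s') hdW)
        have he : ((c + s' • d) - (c₂ + t' • d₂)) - ((c + s • d) - (c₂ + t • d₂))
            + (s - s') • d = (t - t') • d₂ := by module
        rwa [he] at hmem
      have : d₂ = (t - t')⁻¹ • ((t - t') • d₂) := by
        rw [smul_smul, inv_mul_cancel₀ (sub_ne_zero.2 htt), one_smul]
      rw [this]
      exact W.smul_mem _ hsum
    have hQj : affineSpan ℝ {p j.castSucc, p j.succ} ≤ Q := by
      rw [affineSpan_le]
      rintro z hz
      simp only [Set.mem_insert_iff, Set.mem_singleton_iff] at hz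
      rcases hz with rfl | rfl
      · apply hmemQ
        have he : c₂ - (c + s • d) = -((c + s • d) - (c₂ + t • d₂)) + (-t) • d₂ := by
          module
        rw [he]
        exact W.add_mem (W.neg_mem (hKW hxy)) (W.smul_mem _ hd2W)
      · apply hmemQ
        have he : p j.succ - (c + s • d)
            = -((c + s • d) - (c₂ + t • d₂)) + (1 - t) • d₂ := by
          rw [hd2]; module
        rw [he]
        exact W.add_mem (W.neg_mem (hKW hxy)) (W.smul_mem _ hd2W)
    have hdir : finrank ℝ Q.direction = 2 := by
      rw [hQ, AffineSubspace.direction_mk']; exact hfr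
    exact hb i j hspan Q hdir hQi hQj (by rw [hQ, AffineSubspace.direction_mk']; exact huW)

/-- If the unit vector `u` is not parallel to any edge of the embedded polygonal arc `L`
and, for any two distinct coplanar edge lines, `u` is not in the direction of the plane
containing them, then the projection image `π_u(L)` has only finitely many multiple
points. -/
theorem finitely_many_crossing_points
    (n : ℕ) (hn : 1 ≤ n) (p : Fin (n + 1) → E3)
    (hpe : ∀ i : Fin n, p i.castSucc ≠ p i.succ)
    (hemb : ∀ i j : Fin n, (i : ℕ) < (j : ℕ) →
      (((j : ℕ) = (i : ℕ) + 1 →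
          segment ℝ (p i.castSucc) (p i.succ) ∩ segment ℝ (p j.castSucc) (p j.succ)
            = {p i.succ}) ∧
        ((j : ℕ) ≠ (i : ℕ) + 1 →
          segment ℝ (p i.castSucc) (p i.succ) ∩ segment ℝ (p j.castSucc) (p j.succ)
            = ∅)))
    (u : E3) (hu : ‖u‖ = 1)
    -- (a) `u` is not parallel to any edge
    (ha : ∀ i : Fin n, p i.succ - p i.castSucc ∉ (ℝ ∙ u : Submodule ℝ E3))
    -- (b) for two distinct coplanar edge lines, `u` is not in the direction of the plane
    -- containing them
    (hb : ∀ i j : Fin n,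
      affineSpan ℝ {p i.castSucc, p i.succ} ≠ affineSpan ℝ {p j.castSucc, p j.succ} →
      ∀ Q : AffineSubspace ℝ E3, finrank ℝ Q.direction = 2 →
        affineSpan ℝ {p i.castSucc, p i.succ} ≤ Q →
        affineSpan ℝ {p j.castSucc, p j.succ} ≤ Q →
        u ∉ Q.direction) :
    {q : ↥((ℝ ∙ u)ᗮ) |
      2 ≤ Set.encard {x ∈ ⋃ i : Fin n, segment ℝ (p i.castSucc) (p i.succ) |
        projAlong u x = q}}.Finite := by
  have hu0 : u ≠ 0 := fun h => by simp [h] at hu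
  set T : Fin n × Fin n → Set ↥((ℝ ∙ u)ᗮ) := fun ij =>
    {q | ∃ x ∈ segment ℝ (p ij.1.castSucc) (p ij.1.succ),
          ∃ y ∈ segment ℝ (p ij.2.castSucc) (p ij.2.succ),
            x ≠ y ∧ projAlong u x = q ∧ projAlong u y = q} with hT
  have hsub : {q : ↥((ℝ ∙ u)ᗮ) |
      2 ≤ Set.encard {x ∈ ⋃ i : Fin n, segment ℝ (p i.castSucc) (p i.succ) |
        projAlong u x = q}} ⊆ ⋃ ij : Fin n × Fin n, T ij := by
    intro q hq
    have h2 : 1 < Set.encard {x ∈ ⋃ i : Fin n, segment ℝ (p i.castSucc) (p i.succ) |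
        projAlong u x = q} := lt_of_lt_of_le (by norm_num) hq
    obtain ⟨a, b, haa, hbb, hab⟩ := Set.one_lt_encard_iff.1 h2
    obtain ⟨hai, haq⟩ := haa
    obtain ⟨hbi, hbq⟩ := hbb
    rw [Set.mem_iUnion] at hai hbi
    obtain ⟨i, hai⟩ := hai
    obtain ⟨j, hbj⟩ := hbi
    exact Set.mem_iUnion.2 ⟨(i, j), a, hai, b, hbj, hab, haq, hbq⟩
  refine Set.Finite.subset (Set.finite_iUnion fun ij => ?_) hsub
  apply Set.Subsingleton.finite
  rintro q ⟨x, hx, y, hy, hxy, rfl, hyq⟩ q' ⟨x', hx', y', hy', hxy', rfl, hyq'⟩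
  have h1 : x - y ∈ (ℝ ∙ u : Submodule ℝ E3) := (projAlong_eq_iff u x y).1 hyq.symm
  have h2 : x' - y' ∈ (ℝ ∙ u : Submodule ℝ E3) := (projAlong_eq_iff u x' y').1 hyq'.symm
  rw [key_eq hu0 ha hb ij.1 ij.2 hx hx' hy hy' h1 h2 hxy]
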